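/- Let w be a positive integer and λ_x, λ_y, λ_ξ real numbers with λ_x + λ_y + λ_ξ = 0, λ_ξ ≠ 0, and such that w·λ_y/λ_ξ is not an integer. Then (1/w) · (∏_{k=1-w}^{-1} ((k/w)λ_ξ - λ_x)) / (∏_{k=0}^{w-1} λ_ξ(k/w - 1)) = π / (w·z·Γ(1 + λ_x/z)·Γ(1 + λ_y/z)·Γ(1 + λ_ξ/z)·sin(π λ_y/z)), where z = λ_ξ/w. -/

import Mathlib

open Finset

lemma gamma_add_nat_aux (x : ℝ) (hx : ∀ m : ℕ, x + m ≠ 0) (n : ℕ) :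
    Real.Gamma (x + n) = Real.Gamma x * ∏ i ∈ range n, (x + i) := by
  induction n with
  | zero => simp
  | succ n ih =>
    have hx' : x + (n : ℝ) ≠ 0 := hx n
    push_cast
    rw [show x + ((n : ℝ) + 1) = (x + n) + 1 by ring, Real.Gamma_add_one hx', ih,
      prod_range_succ]
    ring

/-- The main disk-term identity (Theorem 3.1): with `z = λ_ξ/w`, the localization
disk factor equals `π / (w z Γ̂_X sin(π λ_y/z))` where
`Γ̂_X = Γ(1+λ_x/z) Γ(1+λ_y/z) Γ(1+λ_ξ/z)`. -/
theorem gamma_class_disk_term (w : ℕ) (hw : 0 < w) (lamX lamY lamXi : ℝ)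
    (hsum : lamX + lamY + lamXi = 0) (hXi : lamXi ≠ 0)
    (hint : ∀ n : ℤ, w * lamY / lamXi ≠ (n : ℝ)) (z : ℝ) (hz : z = lamXi / w) :
    (1 / (w : ℝ)) *
        (∏ j ∈ range (w - 1), (((j : ℝ) + 1 - w) / w * lamXi - lamX)) /
        (∏ k ∈ range w, lamXi * ((k : ℝ) / w - 1))
      = Real.pi /
        (w * z * (Real.Gamma (1 + lamX / z) * Real.Gamma (1 + lamY / z) *
          Real.Gamma (1 + lamXi / z)) * Real.sin (Real.pi * lamY / z)) := by
  obtain ⟨m, rfl⟩ : ∃ m, w = m + 1 := ⟨w - 1, by omega⟩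
  have hwR : ((m : ℝ) + 1) ≠ 0 := by positivity
  have hcast : ((m + 1 : ℕ) : ℝ) = (m : ℝ) + 1 := by push_cast; ring
  have hzne : z ≠ 0 := by
    rw [hz]; exact div_ne_zero hXi (by rw [hcast]; exact hwR)
  have hXiz : lamXi / z = (m : ℝ) + 1 := by
    rw [hz, hcast]; field_simp
  have hXieq : lamXi = z * ((m : ℝ) + 1) := by
    rw [hz, hcast]; field_simp
  set a := lamX / z with ha
  set b := lamY / z with hb
  have hbint : ∀ n : ℤ, b ≠ (n : ℝ) := by
    intro n hn
    apply hint n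
    rw [hb, hz] at hn
    rw [← hn, hcast]
    field_simp
  have hab : a + b = -((m : ℝ) + 1) := by
    rw [ha, hb, ← add_div]
    have h1 : lamX + lamY = -lamXi := by linarith
    rw [h1, neg_div, hXiz]
  have haint : ∀ n : ℤ, a ≠ (n : ℝ) := by
    intro n hn
    apply hbint (-(m : ℤ) - 1 - n)
    have : b = -((m : ℝ) + 1) - a := by linarith
    rw [this, hn]; push_cast; ring
  have hsin : Real.sin (Real.pi * b) ≠ 0 := by
    intro h
    obtain ⟨n, hn⟩ := Real.sin_eq_zero_iff.mp h
    apply hbint n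
    have hπ := Real.pi_ne_zero
    have h2 : Real.pi * b = Real.pi * (n : ℝ) := by rw [← hn]; ring
    exact mul_left_cancel₀ hπ h2
  have hG1 : Real.Gamma (1 + a) ≠ 0 := by
    apply Real.Gamma_ne_zero
    intro k hk
    exact haint (-1 - k) (by push_cast; linarith)
  have hGW : Real.Gamma (a + ((m : ℝ) + 1)) ≠ 0 := by
    apply Real.Gamma_ne_zero
    intro k hk
    exact haint (-(m : ℤ) - 1 - k) (by push_cast; linarith)
  set Φ := ∏ j ∈ range m, (a + 1 + j) with hΦ
  have hGam : Real.Gamma (a + ((m : ℝ) + 1)) = Real.Gamma (1 + a) * Φ := by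
    have hx : ∀ k : ℕ, (a + 1) + (k : ℝ) ≠ 0 := by
      intro k hk
      exact haint (-1 - k) (by push_cast; linarith)
    have h2 := gamma_add_nat_aux (a + 1) hx m
    rw [show a + 1 + (m : ℝ) = a + ((m : ℝ) + 1) by ring] at h2
    rw [h2, add_comm a 1]
    congr 1
    rw [hΦ]
    exact prod_congr rfl fun i _ => by ring
  -- numerator
  have hnum : ∏ j ∈ range (m + 1 - 1), (((j : ℝ) + 1 - ((m + 1 : ℕ) : ℝ)) /
      ((m + 1 : ℕ) : ℝ) * lamXi - lamX) = (-z) ^ m * Φ := by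
    rw [show m + 1 - 1 = m from rfl]
    have hc : ∀ j ∈ range m, (((j : ℝ) + 1 - ((m + 1 : ℕ) : ℝ)) / ((m + 1 : ℕ) : ℝ) *
        lamXi - lamX) = (fun k : ℕ => (-z) * (a + 1 + (k : ℝ))) (m - 1 - j) := by
      intro j hj
      have hj' : j < m := mem_range.mp hj
      have hcc : ((m - 1 - j : ℕ) : ℝ) = (m : ℝ) - 1 - j := by
        have h3 : (m - 1 - j) + (j + 1) = m := by omega
        have h4 := congrArg (fun t : ℕ => (t : ℝ)) h3
        push_cast at h4; linarith
      simp only [hcc, hcast]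
      have hlamX : lamX = a * z := by rw [ha]; field_simp
      rw [hXieq, hlamX]
      field_simp
      ring
    rw [prod_congr rfl hc, prod_range_reflect (fun k : ℕ => (-z) * (a + 1 + (k : ℝ))) m,
      prod_mul_distrib, prod_const, card_range]
  -- denominator
  have hden : ∏ k ∈ range (m + 1), (lamXi * ((k : ℝ) / ((m + 1 : ℕ) : ℝ) - 1))
      = z ^ (m + 1) * ((-1) ^ (m + 1) * (Nat.factorial (m + 1) : ℝ)) := by
    have hc : ∀ k ∈ range (m + 1), lamXi * ((k : ℝ) / ((m + 1 : ℕ) : ℝ) - 1)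
        = (fun j : ℕ => z * (-((j : ℝ) + 1))) (m + 1 - 1 - k) := by
      intro k hk
      have hk' : k < m + 1 := mem_range.mp hk
      have hcc : ((m + 1 - 1 - k : ℕ) : ℝ) = (m : ℝ) - k := by
        have h5 : m + 1 - 1 - k = m - k := by omega
        have h6 : k ≤ m := by omega
        rw [h5, Nat.cast_sub h6]
      simp only [hcc, hcast]
      rw [hXieq]
      field_simp
      ring
    rw [prod_congr rfl hc, prod_range_reflect (fun j : ℕ => z * (-((j : ℝ) + 1))) (m + 1)]
    have hfact : ∏ j ∈ range (m + 1), ((j : ℝ) + 1) = (Nat.factorial (m + 1) : ℝ) := by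
      exact_mod_cast congrArg (fun t : ℕ => (t : ℝ)) (prod_range_add_one_eq_factorial (m + 1))
    calc ∏ j ∈ range (m + 1), (z * (-((j : ℝ) + 1)))
        = ∏ j ∈ range (m + 1), ((z * (-1)) * ((j : ℝ) + 1)) := by
          apply prod_congr rfl; intro j _; ring
      _ = (z * (-1)) ^ (m + 1) * ∏ j ∈ range (m + 1), ((j : ℝ) + 1) := by
          rw [prod_mul_distrib, prod_const, card_range]
      _ = z ^ (m + 1) * ((-1) ^ (m + 1) * (Nat.factorial (m + 1) : ℝ)) := by
          rw [hfact, mul_pow]; ring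
  -- reflection formula
  have hrefl : Real.Gamma (a + ((m : ℝ) + 1)) * Real.Gamma (1 + b) *
      Real.sin (Real.pi * b) = -Real.pi := by
    have h1 : a + ((m : ℝ) + 1) = -b := by linarith
    have h2 := Real.Gamma_mul_Gamma_one_sub (-b)
    rw [sub_neg_eq_add, mul_neg, Real.sin_neg, div_neg] at h2
    rw [h1, h2]
    field_simp
  have hG2 : Real.Gamma (1 + b) = -Real.pi /
      (Real.sin (Real.pi * b) * Real.Gamma (a + ((m : ℝ) + 1))) := by
    rw [eq_div_iff (mul_ne_zero hsin hGW)]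
    linear_combination hrefl
  have hΦne : Φ ≠ 0 := by
    intro h
    rw [hGam, h, mul_zero] at hGW
    exact hGW rfl
  have hGamW : Real.Gamma (1 + lamXi / z) = (Nat.factorial (m + 1) : ℝ) := by
    rw [hXiz, show (1 : ℝ) + ((m : ℝ) + 1) = ((m + 1 : ℕ) : ℝ) + 1 by push_cast; ring,
      Real.Gamma_nat_eq_factorial]
  have hsinarg : Real.pi * lamY / z = Real.pi * b := by
    rw [hb, mul_div_assoc]
  rw [hnum, hden, hGamW, hsinarg, hG2, hGam]
  have hfac : (Nat.factorial (m + 1) : ℝ) ≠ 0 := by positivity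
  have hπ := Real.pi_ne_zero
  rw [hcast]
  field_simp
  ring
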